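/- arXiv:1211.6189 — 4 statements merged into one kernel-verified Lean document; each statement's English description precedes it below -/
import Mathlib

section
/- If ≺₁ and ≺₂ are both irreflexive transitive relations on Σ and ≺₁ ⊆ ≺₂, then for every configuration, the set of globally enabled interactions under ≺₂ is contained in the set of interactions satisfying joint participation; moreover, if some interaction satisfies joint participation at a configuration, then some interaction is globally enabled under ≺₂. Hence the set of deadlocked configurations is the same under ≺₁ and ≺₂. -/
lemma exists_max_aux {Alph : Type*} [Fintype Alph] (r : Alph → Alph → Prop)
    (hirr : Irreflexive r) (htrans : Transitive r) (JP : Alph → Prop)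
    (h : ∃ σ, JP σ) : ∃ σ, JP σ ∧ ¬ ∃ τ, JP τ ∧ r σ τ := by
  haveI : IsTrans Alph (flip r) := ⟨fun a b c hab hbc => htrans hbc hab⟩
  haveI : IsIrrefl Alph (flip r) := ⟨hirr⟩
  have hwf : WellFounded (flip r) :=
    Finite.wellFounded_of_trans_of_irrefl (flip r)
  obtain ⟨m, hm, hmin⟩ := hwf.has_min {σ | JP σ} h
  exact ⟨m, hm, fun ⟨τ, hτ, hr⟩ => hmin τ hτ hr⟩

/-- For `r₁ ⊆ r₂` both irreflexive and transitive, and `JP` the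
joint-participation predicate at a configuration, the globally enabled
interactions under `r₂` are contained in `JP`; if some interaction satisfies
joint participation then some interaction is enabled under `r₂`; hence the
deadlock status (no enabled interaction) is the same under `r₁` and `r₂`. -/
theorem stmt_2 {Alph : Type*} [Fintype Alph]
    (r₁ r₂ : Alph → Alph → Prop)
    (h₁irr : Irreflexive r₁) (h₁trans : Transitive r₁)
    (h₂irr : Irreflexive r₂) (h₂trans : Transitive r₂)
    (hsub : ∀ σ τ, r₁ σ τ → r₂ σ τ)
    (JP : Alph → Prop) :
    ({σ | JP σ ∧ ¬ ∃ τ, JP τ ∧ r₂ σ τ} ⊆ {σ | JP σ}) ∧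
    ((∃ σ, JP σ) → ∃ σ, JP σ ∧ ¬ ∃ τ, JP τ ∧ r₂ σ τ) ∧
    ((¬ ∃ σ, JP σ ∧ ¬ ∃ τ, JP τ ∧ r₁ σ τ) ↔
      (¬ ∃ σ, JP σ ∧ ¬ ∃ τ, JP τ ∧ r₂ σ τ)) := by
  refine ⟨fun σ hσ => hσ.1, exists_max_aux r₂ h₂irr h₂trans JP, ?_⟩
  constructor
  · intro h1 ⟨σ, hσ, _⟩
    exact h1 (exists_max_aux r₁ h₁irr h₁trans JP ⟨σ, hσ⟩)
  · intro h2 ⟨σ, hσ, _⟩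
    exact h2 (exists_max_aux r₂ h₂irr h₂trans JP ⟨σ, hσ⟩)
end

section
/- In a system S under a deployable communication architecture Com, every globally enabled interaction at a configuration c is also distributively-enabled at c. -/
/-- `Visible uses Com σ j`: interaction `σ` is visible by component `j`. -/
def Visible {ι Alph : Type*} (uses : ι → Alph → Prop) (Com : ι → ι → Prop)
    (σ : Alph) (j : ι) : Prop :=
  ∀ i, uses i σ → Com i j

/-- Deployability of a communication architecture `Com`: self-transmission,
group transmission, and existing-priority transmission. -/
def Deployable {ι Alph : Type*} (uses : ι → Alph → Prop)
    (prec : Alph → Alph → Prop) (Com : ι → ι → Prop) : Prop :=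
  (∀ i, Com i i) ∧
  (∀ σ i j, uses i σ → uses j σ → Com i j ∧ Com j i) ∧
  (∀ σ τ i j, prec σ τ → uses j σ → uses i τ → Com i j)

/-- Joint participation of `σ` at configuration `c`: every participating
component has a `σ`-labeled transition with a true guard. -/
def JointPart {ι Alph Config : Type*} (uses : ι → Alph → Prop)
    (hasTrans : Config → ι → Alph → Prop) (c : Config) (σ : Alph) : Prop :=
  ∀ i, uses i σ → hasTrans c i σ

/-- `σ` is globally enabled at `c`. -/
def GloballyEnabled {ι Alph Config : Type*} (uses : ι → Alph → Prop)
    (prec : Alph → Alph → Prop) (hasTrans : Config → ι → Alph → Prop)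
    (c : Config) (σ : Alph) : Prop :=
  JointPart uses hasTrans c σ ∧ ¬ ∃ τ, prec σ τ ∧ JointPart uses hasTrans c τ

/-- `σ` is distributively-enabled at `c` under architecture `Com`. -/
def DistEnabled {ι Alph Config : Type*} (uses : ι → Alph → Prop)
    (prec : Alph → Alph → Prop) (Com : ι → ι → Prop)
    (hasTrans : Config → ι → Alph → Prop) (c : Config) (σ : Alph) : Prop :=
  (∀ i, uses i σ → Visible uses Com σ i ∧ hasTrans c i σ) ∧
  (∀ τ, prec σ τ → (∀ i, uses i σ → Visible uses Com τ i) →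
    ∃ j, uses j τ ∧ ¬ hasTrans c j τ)

/-- Under a deployable communication architecture, every globally
enabled interaction is also distributively-enabled. -/
theorem stmt_3 {ι Alph Config : Type*}
    (uses : ι → Alph → Prop) (prec : Alph → Alph → Prop)
    (Com : ι → ι → Prop) (hasTrans : Config → ι → Alph → Prop)
    (hdep : Deployable uses prec Com)
    (c : Config) (σ : Alph)
    (h : GloballyEnabled uses prec hasTrans c σ) :
    DistEnabled uses prec Com hasTrans c σ := by
  obtain ⟨hjp, hnot⟩ := h
  obtain ⟨-, hgrp, -⟩ := hdep
  constructor
  · intro i hi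
    exact ⟨fun k hk => (hgrp σ k i hk hi).1, hjp i hi⟩
  · intro τ hτ hvis
    by_contra hc
    push_neg at hc
    exact hnot ⟨τ, hτ, hc⟩
end

section
/- In a system S under a deployable communication architecture Com, the set of distributively-enabled interactions at any configuration c equals the set of globally enabled interactions at c. -/
/-- Under a deployable communication architecture, the set of
distributively-enabled interactions at any configuration equals the set of
globally enabled interactions. -/
theorem stmt_4 {ι Alph Config : Type*}
    (uses : ι → Alph → Prop) (prec : Alph → Alph → Prop)
    (Com : ι → ι → Prop) (hasTrans : Config → ι → Alph → Prop)
    (hdep : Deployable uses prec Com)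
    (c : Config) :
    {σ | DistEnabled uses prec Com hasTrans c σ} =
      {σ | GloballyEnabled uses prec hasTrans c σ} := by
  ext σ
  obtain ⟨hself, hgrp, hprec⟩ := hdep
  constructor
  · rintro ⟨h1, h2⟩
    refine ⟨fun i hi => (h1 i hi).2, ?_⟩
    rintro ⟨τ, hστ, hjp⟩
    obtain ⟨j, hj, hnt⟩ := h2 τ hστ (fun i hi k hk => hprec σ τ k i hστ hi hk)
    exact hnt (hjp j hj)
  · rintro ⟨hjp, hno⟩
    refine ⟨fun i hi => ⟨fun k hk => (hgrp σ k i hk hi).1, hjp i hi⟩, ?_⟩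
    intro τ hστ _
    by_contra h
    push_neg at h
    exact hno ⟨τ, hστ, fun j hj => h j hj⟩
end

section
/- In a system S under a deployable communication architecture, if a configuration c has no distributively-enabled interaction, then c has no globally enabled interaction, i.e., c is deadlocked. Consequently, the set of distributed-deadlock configurations equals the set of global-deadlock configurations. -/
/-- Under a deployable communication architecture, a configuration
with no distributively-enabled interaction has no globally enabled interaction
(it is deadlocked); consequently the distributed-deadlock configurations are
exactly the global-deadlock configurations. -/
theorem stmt_5 {ι Alph Config : Type*}
    (uses : ι → Alph → Prop) (prec : Alph → Alph → Prop)
    (Com : ι → ι → Prop) (hasTrans : Config → ι → Alph → Prop)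
    (hdep : Deployable uses prec Com) :
    (∀ c : Config, (¬ ∃ σ, DistEnabled uses prec Com hasTrans c σ) →
      ¬ ∃ σ, GloballyEnabled uses prec hasTrans c σ) ∧
    ({c : Config | ¬ ∃ σ, DistEnabled uses prec Com hasTrans c σ} =
      {c : Config | ¬ ∃ σ, GloballyEnabled uses prec hasTrans c σ}) := by
  obtain ⟨hself, hgroup, hprio⟩ := hdep
  have key : ∀ (c : Config) (σ : Alph),
      GloballyEnabled uses prec hasTrans c σ ↔
      DistEnabled uses prec Com hasTrans c σ := by
    intro c σ
    constructor
    · rintro ⟨hjp, hno⟩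
      refine ⟨fun i hi => ⟨fun k hk => (hgroup σ k i hk hi).1, hjp i hi⟩, ?_⟩
      intro τ hτ _
      by_contra h
      push_neg at h
      exact hno ⟨τ, hτ, h⟩
    · rintro ⟨h1, h2⟩
      refine ⟨fun i hi => (h1 i hi).2, ?_⟩
      rintro ⟨τ, hτ, hjpτ⟩
      obtain ⟨j, hj, hnt⟩ := h2 τ hτ (fun i hi k hk => hprio σ τ k i hτ hi hk)
      exact hnt (hjpτ j hj)
  constructor
  · intro c hc ⟨σ, hσ⟩
    exact hc ⟨σ, (key c σ).mp hσ⟩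
  · ext c
    simp only [Set.mem_setOf_eq]
    constructor
    · intro hc ⟨σ, hσ⟩; exact hc ⟨σ, (key c σ).mp hσ⟩
    · intro hc ⟨σ, hσ⟩; exact hc ⟨σ, (key c σ).mpr hσ⟩
end
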